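/- If a Tychonoff space X is ℓ-dominated by the closed unit interval I = [0,1] (i.e., there is a continuous linear map of C_p(I) onto C_p(X)), then X is compact, metrizable, and strongly countable dimensional (equivalently, X has countable fd-height). -/

import Mathlib

set_option linter.unusedSectionVars false
set_option linter.unusedVariables false
set_option maxHeartbeats 1600000


open Set Function

noncomputable section

/-- Topology of pointwise convergence on `C(X, ℝ)`. -/
def ptTop (X : Type*) [TopologicalSpace X] : TopologicalSpace C(X, ℝ) :=
  TopologicalSpace.induced (fun f => (f : X → ℝ)) Pi.topologicalSpace

/-- `X` ℓ-dominates `Y`: a continuous linear map of `C_p(X)` onto `C_p(Y)`. -/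
def LDominates (X Y : Type*) [TopologicalSpace X] [TopologicalSpace Y] : Prop :=
  ∃ L : C(X, ℝ) →ₗ[ℝ] C(Y, ℝ), @Continuous _ _ (ptTop X) (ptTop Y) L ∧ Surjective L

/-- Covering dimension at most `n`. -/
def CovDimLE (X : Type*) [TopologicalSpace X] (n : ℕ) : Prop :=
  ∀ (ι : Type) (U : ι → Set X), Finite ι → (∀ i, IsOpen (U i)) → (⋃ i, U i) = univ →
    ∃ V : ι → Set X, (∀ i, IsOpen (V i)) ∧ (∀ i, V i ⊆ U i) ∧ (⋃ i, V i) = univ ∧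
      ∀ x : X, {i | x ∈ V i}.ncard ≤ n + 1

/-- Finite (covering) dimensional space. -/
def FinDimSpace (X : Type*) [TopologicalSpace X] : Prop := ∃ n : ℕ, CovDimLE X n

/-- Strongly countable dimensional space. -/
def StronglyCountableDim (X : Type*) [TopologicalSpace X] : Prop :=
  ∃ F : ℕ → Set X, (∀ n, IsClosed (F n)) ∧ (∀ n, FinDimSpace ↥(F n)) ∧ (⋃ n, F n) = univ

/-- `I(S)` relative to a subset: points of `S` with a relatively open
finite dimensional neighbourhood in `S`. -/
def fdI (X : Type*) [TopologicalSpace X] (S : Set X) : Set X :=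
  {x | x ∈ S ∧ ∃ U : Set X, IsOpen U ∧ x ∈ U ∧ FinDimSpace ↥(U ∩ S)}

/-- The transfinite derived sets `K^[α]`. -/
def fdDerived (X : Type*) [TopologicalSpace X] : Ordinal → Set X := fun o =>
  Ordinal.limitRecOn o (univ : Set X)
    (fun _ S => S \ fdI X S)
    (fun o _ ih => ⋂ (o' : Ordinal) (h : o' < o), ih o' h)

/-- A k_ω sequence for `X`. -/
def IsKOmegaSeq (X : Type*) [TopologicalSpace X] (K : ℕ → Set X) : Prop :=
  (∀ n, IsCompact (K n)) ∧ (∀ n, K n ⊆ K (n + 1)) ∧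
  (∀ C : Set X, IsCompact C → ∃ n, C ⊆ K n) ∧
  (∀ A : Set X, (∀ n, ∃ F : Set X, IsClosed F ∧ A ∩ K n = F ∩ K n) → IsClosed A)

def KOmegaSpace (X : Type*) [TopologicalSpace X] : Prop := ∃ K : ℕ → Set X, IsKOmegaSeq X K

/-- Submetrizable: there is a coarser metrizable topology. -/
def Submetrizable (X : Type*) [TopologicalSpace X] : Prop :=
  ∃ t' : TopologicalSpace X, (∀ s : Set X, @IsOpen X t' s → IsOpen s) ∧
    @TopologicalSpace.MetrizableSpace X t'

def Hemicompact (X : Type*) [TopologicalSpace X] : Prop :=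
  ∃ K : ℕ → Set X, (∀ n, IsCompact (K n)) ∧ ∀ C : Set X, IsCompact C → ∃ n, C ⊆ K n

/-- `B` is (functionally) bounded in `X`. -/
def CBounded (X : Type*) [TopologicalSpace X] (B : Set X) : Prop :=
  ∀ f : C(X, ℝ), ∃ M : ℝ, ∀ x ∈ B, |f x| ≤ M

/-- μ-space: closed bounded subsets are compact. -/
def MuSpace (X : Type*) [TopologicalSpace X] : Prop :=
  ∀ B : Set X, IsClosed B → CBounded X B → IsCompact B

/-- `C(K; A)`: continuous functions vanishing on `A`, as a submodule. -/
def Czero (K : Type*) [TopologicalSpace K] (A : Set K) : Submodule ℝ C(K, ℝ) where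
  carrier := {f | ∀ x ∈ A, f x = 0}
  add_mem' := by intro f g hf hg x hx; simp [hf x hx, hg x hx]
  zero_mem' := by intro x hx; simp
  smul_mem' := by intro c f hf x hx; simp [hf x hx]

/-- Pointwise topology on `C(K;A)`. -/
def ptTopSub {K : Type*} [TopologicalSpace K] (A : Set K) :
    TopologicalSpace (Czero K A) :=
  TopologicalSpace.induced (fun f => (f : C(K, ℝ))) (ptTop K)

/-- `c`-good map between relative function spaces. -/
def IsCGood {K₁ K₂ : Type*} [TopologicalSpace K₁] [CompactSpace K₁]
    [TopologicalSpace K₂] [CompactSpace K₂] (A₁ : Set K₁) (A₂ : Set K₂) (c : ℝ)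
    (L : Czero K₁ A₁ →ₗ[ℝ] Czero K₂ A₂) : Prop :=
  @Continuous _ _ (ptTopSub A₁) (ptTopSub A₂) L ∧
  (∀ g : Czero K₁ A₁, ‖(L g : C(K₂, ℝ))‖ ≤ ‖(g : C(K₁, ℝ))‖) ∧
  (∀ f : Czero K₂ A₂, ∃ g : Czero K₁ A₁, L g = f ∧
    ‖(g : C(K₁, ℝ))‖ ≤ c * ‖(f : C(K₂, ℝ))‖)

/-- `c`-good map between full function spaces. -/
def IsCGoodMap {K₁ K₂ : Type*} [TopologicalSpace K₁] [CompactSpace K₁]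
    [TopologicalSpace K₂] [CompactSpace K₂] (c : ℝ)
    (L : C(K₁, ℝ) →ₗ[ℝ] C(K₂, ℝ)) : Prop :=
  @Continuous _ _ (ptTop K₁) (ptTop K₂) L ∧
  (∀ g : C(K₁, ℝ), ‖L g‖ ≤ ‖g‖) ∧
  (∀ f : C(K₂, ℝ), ∃ g : C(K₁, ℝ), L g = f ∧ ‖g‖ ≤ c * ‖f‖)


namespace SCD
open Filter Topology

section Ambient
theorem fiber_collect {a : ℕ} (σ : Fin a → ℝ) (c : Fin a → ℝ) (T : Finset ℝ)
    (hT : ∀ i, σ i ∈ T) (g : ℝ → ℝ) :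
    ∑ i, c i * g (σ i) =
      ∑ t ∈ T, (∑ i ∈ Finset.univ.filter (fun i => σ i = t), c i) * g t := by
  classical
  rw [← Finset.sum_fiberwise_of_maps_to (fun i _ => hT i) (fun i => c i * g (σ i))]
  refine Finset.sum_congr rfl fun t _ => ?_
  rw [Finset.sum_mul]
  refine Finset.sum_congr rfl fun i hi => ?_
  rw [(Finset.mem_filter.1 hi).2]

theorem moments_determine {a b : ℕ} (s : Fin a → ↥unitInterval) (c : Fin a → ℝ)
    (s' : Fin b → ↥unitInterval) (c' : Fin b → ℝ)
    (h : ∀ m : ℕ, m < a + b → ∑ i, c i * (s i : ℝ) ^ m = ∑ i, c' i * (s' i : ℝ) ^ m) :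
    ∀ f : C(↥unitInterval, ℝ), ∑ i, c i * f (s i) = ∑ i, c' i * f (s' i) := by
  classical
  set σ : Fin a → ℝ := fun i => (s i : ℝ) with hσ
  set σ' : Fin b → ℝ := fun i => (s' i : ℝ) with hσ'
  set T : Finset ℝ := (Finset.univ.image σ) ∪ (Finset.univ.image σ') with hTdef
  have hTs : ∀ i, σ i ∈ T := fun i =>
    Finset.mem_union_left _ (Finset.mem_image_of_mem σ (Finset.mem_univ i))
  have hTs' : ∀ i, σ' i ∈ T := fun i =>
    Finset.mem_union_right _ (Finset.mem_image_of_mem σ' (Finset.mem_univ i))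
  set w : ℝ → ℝ := fun t => (∑ i ∈ Finset.univ.filter (fun i => σ i = t), c i) -
    (∑ i ∈ Finset.univ.filter (fun i => σ' i = t), c' i) with hw
  have key : ∀ g : ℝ → ℝ, ∑ i, c i * g (σ i) - ∑ i, c' i * g (σ' i) = ∑ t ∈ T, w t * g t := by
    intro g
    rw [fiber_collect σ c T hTs g, fiber_collect σ' c' T hTs' g, ← Finset.sum_sub_distrib]
    exact Finset.sum_congr rfl fun t _ => by rw [hw]; ring
  have hcard : T.card ≤ a + b := by
    calc T.card ≤ (Finset.univ.image σ).card + (Finset.univ.image σ').card :=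
          Finset.card_union_le _ _
    _ ≤ a + b := by
        have h1 := Finset.card_image_le (s := Finset.univ) (f := σ)
        have h2 := Finset.card_image_le (s := Finset.univ) (f := σ')
        simp only [Finset.card_univ, Fintype.card_fin] at h1 h2
        omega
  -- w vanishes on T
  set k := T.card with hk
  let eo := T.orderIsoOfFin rfl
  set v : Fin k → ℝ := fun i => (eo i : ℝ) with hv
  have hvinj : Function.Injective v := fun i j hij => eo.injective (Subtype.ext hij)
  have hsumT : ∀ F : ℝ → ℝ, ∑ t ∈ T, F t = ∑ i : Fin k, F (v i) := by
    intro F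
    rw [← Finset.sum_attach T F]
    exact (Fintype.sum_equiv eo.toEquiv (fun i => F (v i)) (fun x => F x) (fun i => rfl)).symm
  have hmom : ∀ m : ℕ, m < k → ∑ i : Fin k, (v i) ^ m * w (v i) = 0 := by
    intro m hm
    have hm' : m < a + b := lt_of_lt_of_le hm hcard
    have h0 : ∑ t ∈ T, w t * t ^ m = 0 := by
      have hkey := key (fun t => t ^ m)
      rw [h m hm', sub_self] at hkey
      exact hkey.symm
    calc ∑ i : Fin k, (v i) ^ m * w (v i) = ∑ t ∈ T, w t * t ^ m := by
          rw [hsumT (fun t => w t * t ^ m)]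
          exact Finset.sum_congr rfl fun i _ => mul_comm _ _
    _ = 0 := h0
  have hM : (Matrix.of fun (m i : Fin k) => v i ^ (m : ℕ)).mulVec (fun i => w (v i)) = 0 := by
    funext m
    simp only [Matrix.mulVec, dotProduct, Matrix.of_apply, Pi.zero_apply]
    exact hmom m m.isLt
  have hdet : (Matrix.of fun (m i : Fin k) => v i ^ (m : ℕ)).det ≠ 0 := by
    have heq : (Matrix.of fun (m i : Fin k) => v i ^ (m : ℕ)).transpose =
        Matrix.vandermonde v := rfl
    rw [← Matrix.det_transpose, heq, Matrix.det_vandermonde]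
    refine Finset.prod_ne_zero_iff.2 fun i _ => Finset.prod_ne_zero_iff.2 fun j hj => ?_
    exact sub_ne_zero.2 fun hvij => (Finset.mem_Ioi.1 hj).ne' (hvinj hvij)
  have hw0 : ∀ i, w (v i) = 0 := fun i =>
    congrFun (Matrix.eq_zero_of_mulVec_eq_zero hdet hM) i
  have hwT : ∀ t ∈ T, w t = 0 := by
    intro t ht
    obtain ⟨i, hi⟩ := eo.surjective ⟨t, ht⟩
    have hvi : v i = t := by rw [hv]; exact congrArg Subtype.val hi
    rw [← hvi]; exact hw0 i
  intro f
  set g : ℝ → ℝ := fun t => if ht : t ∈ unitInterval then f ⟨t, ht⟩ else 0 with hg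
  have hgs : ∀ i, g (σ i) = f (s i) := by
    intro i
    rw [hg]
    simp only
    rw [dif_pos (s i).2]
  have hgs' : ∀ i, g (σ' i) = f (s' i) := by
    intro i
    rw [hg]
    simp only
    rw [dif_pos (s' i).2]
  have hfin := key g
  have hzero : ∑ t ∈ T, w t * g t = 0 :=
    Finset.sum_eq_zero fun t ht => by rw [hwT t ht, zero_mul]
  rw [hzero] at hfin
  have e1 : ∑ i, c i * g (σ i) = ∑ i, c i * f (s i) :=
    Finset.sum_congr rfl fun i _ => by rw [hgs i]
  have e2 : ∑ i, c' i * g (σ' i) = ∑ i, c' i * f (s' i) :=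
    Finset.sum_congr rfl fun i _ => by rw [hgs' i]
  rw [e1, e2] at hfin
  linarith


theorem grid_lemma (m : ℕ) (S : Set (Fin m → ℝ)) (hS : IsCompact S)
    (ι : Type) [Finite ι] [Nonempty ι] (O : ι → Set (Fin m → ℝ)) (hO : ∀ i, IsOpen (O i))
    (hcov : S ⊆ ⋃ i, O i) :
    ∃ V : ι → Set (Fin m → ℝ), (∀ i, IsOpen (V i)) ∧ (∀ i, V i ⊆ O i) ∧ (S ⊆ ⋃ i, V i) ∧
      ∀ x : Fin m → ℝ, {i | x ∈ V i}.ncard ≤ 2 ^ m := by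
  classical
  obtain ⟨δ, hδ, hleb⟩ := lebesgue_number_lemma_of_metric hS hO hcov
  set κ := δ / 4 with hκ
  have hκpos : 0 < κ := by rw [hκ]; linarith
  set Q : (Fin m → ℤ) → Set (Fin m → ℝ) := fun z =>
    (univ : Set (Fin m)).pi
      (fun j => Ioo (((z j : ℝ) - 1/4) * κ) (((z j : ℝ) + 5/4) * κ)) with hQ
  have hQopen : ∀ z, IsOpen (Q z) :=
    fun z => isOpen_set_pi finite_univ (fun j _ => isOpen_Ioo)
  have hQmem : ∀ x : Fin m → ℝ, x ∈ Q (fun j => ⌊x j / κ⌋) := by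
    intro x
    rw [hQ, Set.mem_pi]
    intro j _
    have h1 : (⌊x j / κ⌋ : ℝ) ≤ x j / κ := Int.floor_le _
    have h2 : x j / κ < ⌊x j / κ⌋ + 1 := Int.lt_floor_add_one _
    have h3 : (⌊x j / κ⌋ : ℝ) * κ ≤ x j := by
      have hh := mul_le_mul_of_nonneg_right h1 hκpos.le
      rwa [div_mul_cancel₀ _ hκpos.ne'] at hh
    have h4 : x j < ((⌊x j / κ⌋ : ℝ) + 1) * κ := by
      have hh := mul_lt_mul_of_pos_right h2 hκpos
      rwa [div_mul_cancel₀ _ hκpos.ne'] at hh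
    constructor
    · nlinarith
    · nlinarith
  have hQdist : ∀ z, ∀ x ∈ Q z, ∀ w ∈ Q z, dist x w < δ := by
    intro z x hx w hw
    rw [dist_pi_lt_iff hδ]
    intro j
    rw [hQ, Set.mem_pi] at hx hw
    have hxj := hx j (mem_univ j)
    have hwj := hw j (mem_univ j)
    rw [mem_Ioo] at hxj hwj
    rw [Real.dist_eq, abs_sub_lt_iff]
    constructor <;> nlinarith
  have hgood : ∀ z, (Q z ∩ S).Nonempty → ∃ i, Q z ⊆ O i := by
    rintro z ⟨x0, hx0Q, hx0S⟩
    obtain ⟨i, hi⟩ := hleb x0 hx0S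
    refine ⟨i, fun w hw => hi ?_⟩
    rw [Metric.mem_ball]
    rw [dist_comm]
    exact hQdist z x0 hx0Q w hw
  set pick : (Fin m → ℤ) → ι := fun z =>
    if h : (Q z ∩ S).Nonempty then (hgood z h).choose else Classical.arbitrary ι with hpickdef
  have hpick : ∀ z (h : (Q z ∩ S).Nonempty), Q z ⊆ O (pick z) := by
    intro z h
    rw [hpickdef]
    simp only [dif_pos h]
    exact (hgood z h).choose_spec
  set V : ι → Set (Fin m → ℝ) :=
    fun i => ⋃ z ∈ {z | (Q z ∩ S).Nonempty ∧ pick z = i}, Q z with hV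
  refine ⟨V, ?_, ?_, ?_, ?_⟩
  · intro i
    exact isOpen_biUnion fun z _ => hQopen z
  · intro i
    refine iUnion₂_subset ?_
    rintro z ⟨hz1, hz2⟩
    rw [← hz2]
    exact hpick z hz1
  · intro x hxS
    set z : Fin m → ℤ := fun j => ⌊x j / κ⌋ with hzdef
    have hZ : (Q z ∩ S).Nonempty := ⟨x, hQmem x, hxS⟩
    refine mem_iUnion.2 ⟨pick z, ?_⟩
    exact mem_biUnion ⟨hZ, rfl⟩ (hQmem x)
  · intro x
    set Zx := {z : Fin m → ℤ | x ∈ Q z} with hZx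
    have hzopt : ∀ z ∈ Zx, ∀ j, z j = ⌊x j / κ - 5/4⌋ + 1 ∨ z j = ⌊x j / κ - 5/4⌋ + 2 := by
      intro z hz j
      have hj : x ∈ Q z := hz
      rw [hQ, Set.mem_pi] at hj
      have hj' := hj j (mem_univ j)
      rw [mem_Ioo] at hj'
      have hlow : x j / κ - 5/4 < (z j : ℝ) := by
        have h5 : x j / κ < (z j : ℝ) + 5/4 := (div_lt_iff₀ hκpos).2 hj'.2
        linarith
      have hhigh : (z j : ℝ) < x j / κ - 5/4 + 3/2 := by
        have h5 : (z j : ℝ) - 1/4 < x j / κ := (lt_div_iff₀ hκpos).2 hj'.1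
        linarith
      have hfl : ⌊x j / κ - 5/4⌋ < z j := Int.floor_lt.2 hlow
      have hflr := Int.lt_floor_add_one (x j / κ - 5/4)
      have hc : (z j : ℝ) < ((⌊x j / κ - 5/4⌋ + 3 : ℤ) : ℝ) := by push_cast; linarith
      have hzle : z j < ⌊x j / κ - 5/4⌋ + 3 := by exact_mod_cast hc
      omega
    have hinjOn : Set.InjOn (fun z : Fin m → ℤ => fun j => decide (z j = ⌊x j / κ - 5/4⌋ + 1)) Zx := by
      intro z1 h1 z2 h2 heq
      funext j
      have e1 := hzopt z1 h1 j
      have e2 := hzopt z2 h2 j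
      have heqj := congrFun heq j
      simp only [decide_eq_decide] at heqj
      rcases e1 with e1 | e1 <;> rcases e2 with e2 | e2 <;> omega
    have hZxfin : Zx.Finite := by
      refine Set.Finite.of_finite_image ?_ hinjOn
      exact Set.Finite.subset (Set.finite_univ) (subset_univ _)
    have hsub : {i | x ∈ V i} ⊆ pick '' Zx := by
      intro i hi
      have hx' : x ∈ V i := hi
      rw [hV] at hx'
      simp only [mem_iUnion] at hx'
      obtain ⟨z, hzc, hzQ⟩ := hx'
      exact ⟨z, hzQ, hzc.2⟩
    calc {i | x ∈ V i}.ncard ≤ (pick '' Zx).ncard :=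
          Set.ncard_le_ncard hsub (hZxfin.image _)
    _ ≤ Zx.ncard := Set.ncard_image_le hZxfin
    _ ≤ (univ : Set (Fin m → Bool)).ncard :=
        Set.ncard_le_ncard_of_injOn _ (fun z _ => mem_univ _) hinjOn finite_univ
    _ = 2 ^ m := by
        rw [Set.ncard_univ, Nat.card_eq_fintype_card, Fintype.card_fun]
        simp

theorem covDimLE_of_emb {Y : Type*} [TopologicalSpace Y] [CompactSpace Y] [T2Space Y]
    (m : ℕ) (q : Y → (Fin m → ℝ)) (hqc : Continuous q) (hqi : Function.Injective q) :
    CovDimLE Y (2 ^ m - 1) := by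
  intro ι U hfin hUopen hUcov
  cases isEmpty_or_nonempty ι with
  | inl hempty =>
    refine ⟨U, hUopen, fun i => subset_rfl, hUcov, ?_⟩
    intro x
    have : {i | x ∈ U i} = ∅ := eq_empty_of_isEmpty _
    rw [this]
    simp
  | inr hne =>
    classical
    have hemb : Topology.IsClosedEmbedding q := hqc.isClosedEmbedding hqi
    have hopens : ∀ i, ∃ O, IsOpen O ∧ q ⁻¹' O = U i :=
      fun i => hemb.isInducing.isOpen_iff.1 (hUopen i)
    choose O hOopen hOpre using hopens
    have hScomp : IsCompact (range q) := isCompact_range hqc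
    have hScov : range q ⊆ ⋃ i, O i := by
      rintro _ ⟨y, rfl⟩
      have hy : y ∈ ⋃ i, U i := hUcov ▸ mem_univ y
      obtain ⟨i, hi⟩ := mem_iUnion.1 hy
      rw [← hOpre i] at hi
      exact mem_iUnion.2 ⟨i, hi⟩
    obtain ⟨V', hV'open, hV'sub, hV'cov, hV'mul⟩ :=
      grid_lemma m (range q) hScomp ι O hOopen hScov
    refine ⟨fun i => q ⁻¹' (V' i), fun i => (hV'open i).preimage hqc, ?_, ?_, ?_⟩
    · intro i y hy
      rw [← hOpre i]
      exact hV'sub i hy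
    · rw [eq_univ_iff_forall]
      intro y
      obtain ⟨i, hi⟩ := mem_iUnion.1 (hV'cov (mem_range_self y))
      exact mem_iUnion.2 ⟨i, hi⟩
    · intro y
      have he : {i | y ∈ q ⁻¹' V' i} = {i | q y ∈ V' i} := rfl
      rw [he]
      have h1 := hV'mul (q y)
      have h2 : 1 ≤ 2 ^ m := Nat.one_le_two_pow
      omega

end Ambient


variable {X : Type*} [TopologicalSpace X] [T35Space X]
  (L : C(↥unitInterval, ℝ) →ₗ[ℝ] C(X, ℝ))
  (hLc : @Continuous _ _ (ptTop ↥unitInterval) (ptTop X) L)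
  (hLs : Surjective L)

/-- bump functions on a metric space through finitely many points -/
def bump {k : ℕ} (s : Fin k → ↥unitInterval) (i : Fin k) : C(↥unitInterval, ℝ) :=
  ⟨fun y => ∏ j ∈ Finset.univ.erase i, (dist y (s j) / dist (s i) (s j)),
   by
    apply continuous_finset_prod
    intro j _
    exact (continuous_id.dist continuous_const).div_const _⟩

theorem bump_self {k : ℕ} (s : Fin k → ↥unitInterval) (hs : Function.Injective s)
    (i : Fin k) : bump s i (s i) = 1 := by
  simp only [bump, ContinuousMap.coe_mk]
  apply Finset.prod_eq_one
  intro j hj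
  have hne : s i ≠ s j := fun h => (Finset.ne_of_mem_erase hj) (hs h.symm)
  exact div_self (by simpa [dist_eq_zero] using hne)

theorem bump_other {k : ℕ} (s : Fin k → ↥unitInterval) (i j : Fin k) (hij : j ≠ i) :
    bump s i (s j) = 0 := by
  simp only [bump, ContinuousMap.coe_mk]
  apply Finset.prod_eq_zero (Finset.mem_erase.2 ⟨hij, Finset.mem_univ j⟩)
  simp [dist_self]

theorem rep_exists (L : C(↥unitInterval, ℝ) →ₗ[ℝ] C(X, ℝ))
    (hL : @Continuous _ _ (ptTop ↥unitInterval) (ptTop X) L) (x : X) :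
    ∃ (k : ℕ) (s : Fin k → ↥unitInterval) (c : Fin k → ℝ),
      ∀ f : C(↥unitInterval, ℝ), L f x = ∑ i, c i * f (s i) := by
  classical
  have hev : @Continuous _ _ (ptTop X) _ (fun g : C(X, ℝ) => g x) := by
    letI : TopologicalSpace C(X, ℝ) := ptTop X
    exact (continuous_apply x).comp continuous_induced_dom
  have hψ : @Continuous _ _ (ptTop ↥unitInterval) _ (fun f : C(↥unitInterval, ℝ) => L f x) := by
    letI : TopologicalSpace C(↥unitInterval, ℝ) := ptTop ↥unitInterval
    letI : TopologicalSpace C(X, ℝ) := ptTop X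
    exact hev.comp hL
  -- neighborhood extraction
  have h0 : (fun f : C(↥unitInterval, ℝ) => L f x) ⁻¹' (Ioo (-1 : ℝ) 1) ∈
      @nhds _ (ptTop ↥unitInterval) 0 := by
    letI : TopologicalSpace C(↥unitInterval, ℝ) := ptTop ↥unitInterval
    have hz : L 0 x = 0 := by rw [map_zero]; rfl
    refine hψ.continuousAt.preimage_mem_nhds ?_
    rw [hz]
    exact Ioo_mem_nhds (by norm_num) (by norm_num)
  rw [show ptTop ↥unitInterval = TopologicalSpace.induced
        (fun f : C(↥unitInterval, ℝ) => (f : ↥unitInterval → ℝ)) Pi.topologicalSpace from rfl,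
      nhds_induced] at h0
  obtain ⟨S, hS, hSsub⟩ := h0
  rw [show ((0 : C(↥unitInterval,ℝ)) : ↥unitInterval → ℝ) = (fun _ => 0) from rfl, nhds_pi,
      Filter.mem_pi] at hS
  obtain ⟨I, hIfin, t, ht, htsub⟩ := hS
  -- vanishing
  have key : ∀ g : C(↥unitInterval, ℝ), (∀ p ∈ I, g p = 0) → L g x = 0 := by
    intro g hg
    by_contra hne
    have habs : 0 < |L g x| := abs_pos.2 hne
    set r : ℝ := 2 / |L g x| with hr
    have hrpos : 0 < r := by positivity
    have hmem : ((r • g : C(↥unitInterval,ℝ)) : ↥unitInterval → ℝ) ∈ I.pi t := by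
      rw [Set.mem_pi]
      intro p hp
      have : (r • g : C(↥unitInterval,ℝ)) p = 0 := by simp [hg p hp]
      rw [this]
      exact mem_of_mem_nhds (ht p)
    have hin : (r • g : C(↥unitInterval,ℝ)) ∈
        (fun f : C(↥unitInterval, ℝ) => (f : ↥unitInterval → ℝ)) ⁻¹' S := htsub hmem
    have := hSsub hin
    simp only [mem_preimage, mem_Ioo] at this
    have hLsg : L (r • g) x = r * L g x := by rw [map_smul]; rfl
    rw [hLsg] at this
    have h1 : |r * L g x| < 1 := abs_lt.2 ⟨this.1, this.2⟩
    have : |r * L g x| = 2 := by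
      rw [abs_mul, abs_of_pos hrpos, hr, div_mul_eq_mul_div, mul_comm]
      field_simp
    linarith
  -- enumerate I
  set T := hIfin.toFinset with hT
  set k := T.card with hk
  let e := T.orderIsoOfFin rfl
  set s : Fin k → ↥unitInterval := fun i => (e i : ↥unitInterval) with hsdef
  have hs : Function.Injective s := by
    intro a b hab
    have := e.injective (Subtype.ext hab)
    exact this
  have hmemI : ∀ p ∈ I, ∃ j, s j = p := by
    intro p hp
    have hp' : p ∈ T := hIfin.mem_toFinset.2 hp
    obtain ⟨j, hj⟩ := e.surjective ⟨p, hp'⟩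
    exact ⟨j, by rw [hsdef]; simp [hj]⟩
  refine ⟨k, s, fun i => L (bump s i) x, fun f => ?_⟩
  have hgzero : ∀ p ∈ I, (f - ∑ i, f (s i) • bump s i) p = 0 := by
    intro p hp
    obtain ⟨j, hj⟩ := hmemI p hp
    subst hj
    simp only [ContinuousMap.sub_apply, ContinuousMap.coe_sum, Finset.sum_apply,
      ContinuousMap.coe_smul, Pi.smul_apply, smul_eq_mul]
    rw [Finset.sum_eq_single j]
    · rw [bump_self s hs]; ring
    · intro b _ hbj; rw [bump_other s b j (Ne.symm hbj)]; ring
    · intro h; exact absurd (Finset.mem_univ j) h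
  have h0' := key _ hgzero
  have : L f x = L (∑ i, f (s i) • bump s i) x := by
    have : L (f - ∑ i, f (s i) • bump s i) x = L f x - L (∑ i, f (s i) • bump s i) x := by
      rw [map_sub]; rfl
    rw [this] at h0'
    linarith
  rw [this, map_sum]
  simp only [map_smul]
  simp only [ContinuousMap.coe_sum, Finset.sum_apply, ContinuousMap.coe_smul,
    Pi.smul_apply, smul_eq_mul]
  exact Finset.sum_congr rfl fun i _ => mul_comm _ _


/-- power functions -/
def pw (m : ℕ) : C(↥unitInterval, ℝ) := ⟨fun t => (t : ℝ) ^ m, by continuity⟩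



/-- number of atoms of the chosen representation -/
def rk (x : X) : ℕ := (rep_exists L hLc x).choose

def rs (x : X) : Fin (rk L hLc x) → ↥unitInterval :=
  (rep_exists L hLc x).choose_spec.choose

def rc (x : X) : Fin (rk L hLc x) → ℝ :=
  (rep_exists L hLc x).choose_spec.choose_spec.choose

theorem rrep (x : X) :
    ∀ f : C(↥unitInterval, ℝ), L f x = ∑ i, rc L hLc x i * f (rs L hLc x i) :=
  (rep_exists L hLc x).choose_spec.choose_spec.choose_spec

/-- the norm bound of the chosen representation -/
def rho (x : X) : ℝ := ∑ i, |rc L hLc x i|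

theorem rho_nonneg (x : X) : 0 ≤ rho L hLc x :=
  Finset.sum_nonneg fun i _ => abs_nonneg _

theorem abs_L_le (f : C(↥unitInterval, ℝ)) (x : X) :
    |L f x| ≤ rho L hLc x * ‖f‖ := by
  rw [rrep L hLc x f]
  calc |∑ i, rc L hLc x i * f (rs L hLc x i)| ≤ ∑ i, |rc L hLc x i * f (rs L hLc x i)| :=
        Finset.abs_sum_le_sum_abs _ _
  _ ≤ ∑ i, |rc L hLc x i| * ‖f‖ := by
      refine Finset.sum_le_sum fun i _ => ?_
      rw [abs_mul]
      refine mul_le_mul_of_nonneg_left ?_ (abs_nonneg _)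
      simpa [Real.norm_eq_abs] using ContinuousMap.norm_coe_le_norm f (rs L hLc x i)
  _ = rho L hLc x * ‖f‖ := by rw [rho, Finset.sum_mul]

/-- moment map -/
def eD (x : X) : ℕ → ℝ := fun m => L (pw m) x

theorem eD_continuous : Continuous (eD L) :=
  continuous_pi fun m => (L (pw m)).continuous

include hLc in
/-- the point x has a representation compatible with (s, c) -/
theorem rep_of_moments {n : ℕ} (s : Fin n → ↥unitInterval) (c : Fin n → ℝ) (x : X)
    (h : ∀ m : ℕ, eD L x m = ∑ i, c i * (s i : ℝ) ^ m) :
    ∀ f : C(↥unitInterval, ℝ), L f x = ∑ i, c i * f (s i) := by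
  intro f
  have hmom : ∀ m : ℕ, m < rk L hLc x + n →
      ∑ i, rc L hLc x i * (rs L hLc x i : ℝ) ^ m = ∑ i, c i * (s i : ℝ) ^ m := by
    intro m _
    rw [← h m, eD, rrep L hLc x (pw m)]
    rfl
  have hmd := moments_determine _ _ _ _ hmom f
  rw [rrep L hLc x f, hmd]

def Tmap (n : ℕ) : ((Fin n → ↥unitInterval) × (Fin n → ℝ)) → (ℕ → ℝ) :=
  fun p m => ∑ i, p.2 i * (p.1 i : ℝ) ^ m

theorem Tmap_continuous (n : ℕ) : Continuous (Tmap n) := by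
  refine continuous_pi fun m => ?_
  refine continuous_finset_sum _ fun i _ => ?_
  exact ((continuous_apply i).comp continuous_snd).mul
    (((continuous_subtype_val.comp ((continuous_apply i).comp continuous_fst))).pow m)

def Pset (n : ℕ) : Set ((Fin n → ↥unitInterval) × (Fin n → ℝ)) :=
  {p | ∑ i, |p.2 i| ≤ (n : ℝ)}

theorem isCompact_Pset (n : ℕ) : IsCompact (Pset n) := by
  have h1 : IsCompact ((univ : Set (Fin n → ↥unitInterval)) ×ˢ
      (Icc (fun _ => -(n : ℝ)) (fun _ => (n : ℝ)) : Set (Fin n → ℝ))) :=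
    isCompact_univ.prod isCompact_Icc
  refine IsCompact.of_isClosed_subset h1 ?_ ?_
  · have : Continuous fun p : ((Fin n → ↥unitInterval) × (Fin n → ℝ)) => ∑ i, |p.2 i| :=
      continuous_finset_sum _ fun i _ => ((continuous_apply i).comp continuous_snd).abs
    exact isClosed_le this continuous_const
  · rintro ⟨s, c⟩ hp
    refine ⟨mem_univ _, ?_⟩
    rw [mem_Icc]
    have habs : ∀ i, |c i| ≤ (n : ℝ) := by
      intro i
      refine le_trans ?_ hp
      exact Finset.single_le_sum (fun j _ => abs_nonneg (c j)) (Finset.mem_univ i)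
    constructor
    · intro i; exact neg_le_of_abs_le (habs i)
    · intro i; exact le_of_abs_le (habs i)

def Mset (n : ℕ) : Set (ℕ → ℝ) := Tmap n '' Pset n

theorem isCompact_Mset (n : ℕ) : IsCompact (Mset n) :=
  (isCompact_Pset n).image (Tmap_continuous n)

def XS (n : ℕ) : Set X := eD L ⁻¹' (Mset n)

theorem isClosed_XS (n : ℕ) : IsClosed (XS L n) :=
  ((isCompact_Mset n).isClosed).preimage (eD_continuous L)

include hLc in
theorem XS_cover (x : X) : ∃ n, x ∈ XS L n := by
  classical
  set k := rk L hLc x with hk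
  set s := rs L hLc x with hs
  set c := rc L hLc x with hc
  set m := ⌈rho L hLc x⌉₊ with hm
  refine ⟨k + m, ?_⟩
  refine ⟨⟨Fin.append s (fun _ => (⟨0, unitInterval.zero_mem⟩ : ↥unitInterval)),
      Fin.append c 0⟩, ?_, ?_⟩
  · show ∑ i, |Fin.append c 0 i| ≤ ((k + m : ℕ) : ℝ)
    rw [Fin.sum_univ_add]
    simp only [Fin.append_left, Fin.append_right, Pi.zero_apply, abs_zero,
      Finset.sum_const_zero, add_zero]
    calc ∑ i, |c i| ≤ (m : ℝ) := Nat.le_ceil _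
    _ ≤ ((k + m : ℕ) : ℝ) := by push_cast; linarith [Nat.cast_nonneg (α := ℝ) k]
  · funext mm
    show Tmap (k + m) _ mm = eD L x mm
    rw [Tmap]
    simp only
    rw [Fin.sum_univ_add]
    simp only [Fin.append_left, Fin.append_right, Pi.zero_apply, zero_mul,
      Finset.sum_const_zero, add_zero]
    rw [eD, rrep L hLc x (pw mm)]
    rfl


include hLs in
theorem sep_points (x y : X) (hxy : ∀ f, L f x = L f y) : x = y := by
  by_contra hne
  obtain ⟨f, hfc, hfx, hfy⟩ := CompletelyRegularSpace.completely_regular x {y}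
    isClosed_singleton (by simpa using hne)
  set g : C(X, ℝ) := ⟨fun u => (f u : ℝ), continuous_subtype_val.comp hfc⟩ with hg
  obtain ⟨f₀, hf₀⟩ := hLs g
  have h1 := hxy f₀
  rw [hf₀] at h1
  have hx0 : g x = 0 := by rw [hg]; simp [hfx]
  have hy1 : g y = 1 := by
    rw [hg]
    simp only [ContinuousMap.coe_mk]
    rw [hfy (mem_singleton y)]
    norm_num
  rw [hx0, hy1] at h1
  norm_num at h1


include hLc hLs in
theorem eD_injective : Injective (eD L) := by
  intro x y hxy
  apply sep_points L hLs
  intro f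
  have hmom : ∀ m : ℕ, m < rk L hLc x + rk L hLc y →
      ∑ i, rc L hLc x i * (rs L hLc x i : ℝ) ^ m =
        ∑ i, rc L hLc y i * (rs L hLc y i : ℝ) ^ m := by
    intro m _
    have h1 : L (pw m) x = L (pw m) y := congrFun hxy m
    rw [rrep L hLc x (pw m), rrep L hLc y (pw m)] at h1
    exact h1
  have hmd := moments_determine _ _ _ _ hmom f
  rw [rrep L hLc x f, rrep L hLc y f]
  exact hmd

include hLc hLs in
theorem XS_inj {n : ℕ} {x y : X} (hx : x ∈ XS L n) (hy : y ∈ XS L n)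
    (hmm : ∀ m, m < n + n → eD L x m = eD L y m) : x = y := by
  obtain ⟨p, hp, hpx⟩ := hx
  obtain ⟨q, hq, hqy⟩ := hy
  have hrx : ∀ f, L f x = ∑ i, p.2 i * f (p.1 i) :=
    rep_of_moments L hLc p.1 p.2 x (fun m => by rw [← hpx]; rfl)
  have hry : ∀ f, L f y = ∑ i, q.2 i * f (q.1 i) :=
    rep_of_moments L hLc q.1 q.2 y (fun m => by rw [← hqy]; rfl)
  have hmom : ∀ m, m < n + n →
      ∑ i, p.2 i * (p.1 i : ℝ) ^ m = ∑ i, q.2 i * (q.1 i : ℝ) ^ m := by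
    intro m hm
    have h1 : Tmap n p m = eD L x m := by rw [hpx]
    have h2 : Tmap n q m = eD L y m := by rw [hqy]
    calc ∑ i, p.2 i * (p.1 i : ℝ) ^ m = eD L x m := h1
    _ = eD L y m := hmm m hm
    _ = ∑ i, q.2 i * (q.1 i : ℝ) ^ m := h2.symm
  apply sep_points L hLs
  intro f
  rw [hrx f, hry f]
  exact moments_determine _ _ _ _ hmom f

def Dm (x y : X) : ℝ := ∑' m, (1/2 : ℝ) ^ m * min 1 |eD L x m - eD L y m|

theorem Dm_term_nonneg (x y : X) (m : ℕ) :
    0 ≤ (1/2 : ℝ) ^ m * min 1 |eD L x m - eD L y m| := by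
  apply mul_nonneg (by positivity)
  exact le_min zero_le_one (abs_nonneg _)

theorem Dm_term_le (x y : X) (m : ℕ) :
    (1/2 : ℝ) ^ m * min 1 |eD L x m - eD L y m| ≤ (1/2 : ℝ) ^ m := by
  nth_rewrite 2 [← mul_one ((1/2:ℝ)^m)]
  exact mul_le_mul_of_nonneg_left (min_le_left _ _) (by positivity)

theorem Dm_summable (x y : X) :
    Summable (fun m => (1/2 : ℝ) ^ m * min 1 |eD L x m - eD L y m|) :=
  Summable.of_nonneg_of_le (Dm_term_nonneg L x y) (Dm_term_le L x y)
    (summable_geometric_of_lt_one (by norm_num) (by norm_num))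

theorem Dm_nonneg (x y : X) : 0 ≤ Dm L x y := tsum_nonneg (Dm_term_nonneg L x y)

theorem Dm_self (x : X) : Dm L x x = 0 := by
  rw [Dm]
  convert tsum_zero with m
  simp

theorem Dm_symm (x y : X) : Dm L x y = Dm L y x := by
  rw [Dm, Dm]
  congr 1
  funext m
  rw [abs_sub_comm]

theorem Dm_triangle (x y z : X) : Dm L x z ≤ Dm L x y + Dm L y z := by
  rw [Dm, Dm, Dm, ← Summable.tsum_add (Dm_summable L x y) (Dm_summable L y z)]
  refine Summable.tsum_le_tsum (fun m => ?_) (Dm_summable L x z)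
    ((Dm_summable L x y).add (Dm_summable L y z))
  rw [← mul_add]
  refine mul_le_mul_of_nonneg_left ?_ (by positivity)
  rcases le_total 1 |eD L x m - eD L y m| with h1 | h1
  · calc min 1 |eD L x m - eD L z m| ≤ 1 := min_le_left _ _
    _ ≤ min 1 |eD L x m - eD L y m| + min 1 |eD L y m - eD L z m| := by
        have := le_min (le_refl (1:ℝ)) h1
        have h2 : (0:ℝ) ≤ min 1 |eD L y m - eD L z m| := le_min zero_le_one (abs_nonneg _)
        have h3 : min (1:ℝ) |eD L x m - eD L y m| = 1 := min_eq_left h1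
        linarith
  rcases le_total 1 |eD L y m - eD L z m| with h2 | h2
  · calc min 1 |eD L x m - eD L z m| ≤ 1 := min_le_left _ _
    _ ≤ _ := by
        have h3 : min (1:ℝ) |eD L y m - eD L z m| = 1 := min_eq_left h2
        have h4 : (0:ℝ) ≤ min 1 |eD L x m - eD L y m| := le_min zero_le_one (abs_nonneg _)
        linarith
  · rw [min_eq_right h1, min_eq_right h2]
    calc min 1 |eD L x m - eD L z m| ≤ |eD L x m - eD L z m| := min_le_right _ _
    _ ≤ |eD L x m - eD L y m| + |eD L y m - eD L z m| := abs_sub_le _ _ _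
    _ ≤ _ := le_refl _

theorem Dm_continuous : Continuous fun p : X × X => Dm L p.1 p.2 := by
  refine continuous_tsum (u := fun m : ℕ => (1/2 : ℝ) ^ m)
    (f := fun m (p : X × X) => (1/2 : ℝ) ^ m * min 1 |eD L p.1 m - eD L p.2 m|)
    (fun m => ?_) (summable_geometric_of_lt_one (by norm_num) (by norm_num)) (fun m p => ?_)
  · refine Continuous.mul continuous_const ?_
    refine Continuous.min continuous_const ?_
    refine Continuous.abs ?_
    exact (((continuous_apply m).comp (eD_continuous L)).comp continuous_fst).sub
      (((continuous_apply m).comp (eD_continuous L)).comp continuous_snd)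
  · rw [Real.norm_eq_abs, abs_of_nonneg (Dm_term_nonneg L _ _ m)]
    exact Dm_term_le L _ _ m

include hLc hLs in
theorem Dm_eq_zero_iff (x y : X) : Dm L x y = 0 ↔ x = y := by
  constructor
  · intro h
    apply eD_injective L hLc hLs
    funext m
    have hterm : (1/2:ℝ)^m * min 1 |eD L x m - eD L y m| = 0 := by
      by_contra hne
      have hlt : 0 < (1/2:ℝ)^m * min 1 |eD L x m - eD L y m| :=
        lt_of_le_of_ne (Dm_term_nonneg L x y m) (Ne.symm hne)
      have hle : (1/2:ℝ)^m * min 1 |eD L x m - eD L y m| ≤ Dm L x y :=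
        Summable.le_tsum (Dm_summable L x y) m (fun i _ => Dm_term_nonneg L x y i)
      rw [h] at hle
      linarith
    have hpos : (0:ℝ) < (1/2)^m := by positivity
    have hmin : min 1 |eD L x m - eD L y m| = 0 := by
      rcases mul_eq_zero.1 hterm with h1 | h1
      · exact absurd h1 (ne_of_gt hpos)
      · exact h1
    have habs : |eD L x m - eD L y m| = 0 := by
      rcases min_eq_iff.1 hmin with ⟨h1, _⟩ | ⟨h1, _⟩
      · norm_num at h1
      · exact h1
    exact sub_eq_zero.1 (abs_eq_zero.1 habs)
  · intro h; rw [h, Dm_self]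


theorem Dm_cont_left (v : X) : Continuous fun u : X => Dm L u v :=
  (Dm_continuous L).comp (continuous_id.prodMk continuous_const)

include hLc hLs in
theorem exists_mapClusterPt (x : ℕ → X) : ∃ y : X, MapClusterPt y atTop x := by
  by_contra hno
  push_neg at hno
  have hfin : ∀ y : X, ∃ U : Set X, IsOpen U ∧ y ∈ U ∧ ∃ N : ℕ, ∀ j ≥ N, x j ∉ U := by
    intro y
    have h1 := hno y
    rw [mapClusterPt_iff_frequently] at h1
    push_neg at h1
    obtain ⟨s, hs, hev⟩ := h1
    obtain ⟨N, hN⟩ := eventually_atTop.1 hev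
    exact ⟨interior s, isOpen_interior, mem_interior_iff_mem_nhds.2 hs, N,
      fun j hj hmem => hN j hj (interior_subset hmem)⟩
  have hfun : ∃ h : C(X, ℝ), ∀ n : ℕ, ∃ j,
      ((n : ℝ) + 1) * (1 + rho L hLc (x j)) ≤ h (x j) := by
    by_cases hD : ∃ y : X, ∀ ε > (0:ℝ), ∀ N : ℕ, ∃ j ≥ N, Dm L (x j) y < ε
    · -- CASE 1 : a Dm-cluster point exists
      obtain ⟨y, hy⟩ := hD
      obtain ⟨U, hUopen, hyU, N₀, hN₀⟩ := hfin y
      obtain ⟨tW, htW, htWc, htWU⟩ := exists_mem_nhds_isClosed_subset (hUopen.mem_nhds hyU)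
      set W := interior tW with hW
      have hyW : y ∈ W := mem_interior_iff_mem_nhds.2 htW
      have hWopen : IsOpen W := isOpen_interior
      have hclWU : closure W ⊆ U := by
        calc closure W ⊆ closure tW := closure_mono interior_subset
        _ = tW := htWc.closure_eq
        _ ⊆ U := htWU
      have hpos : ∀ j, N₀ ≤ j → 0 < Dm L (x j) y := by
        intro j hj
        rcases (Dm_nonneg L (x j) y).lt_or_eq with h | h
        · exact h
        · exact absurd (((Dm_eq_zero_iff L hLc hLs (x j) y).1 h.symm) ▸ hyU)
            (hN₀ j hj)
      have hstep : ∀ ε : ℝ, 0 < ε → ∃ j, N₀ ≤ j ∧ Dm L (x j) y < ε := by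
        intro ε hε
        obtain ⟨j, hj1, hj2⟩ := hy ε hε N₀
        exact ⟨j, hj1, hj2⟩
      choose Fj hFj1 hFj2 using hstep
      set T : ℕ → {j : ℕ // N₀ ≤ j} := fun n => Nat.rec ⟨Fj 1 one_pos, hFj1 1 one_pos⟩
        (fun i prev =>
          ⟨Fj (min (Dm L (x prev.1) y) ((1/2)^(i+1)))
             (lt_min (hpos prev.1 prev.2) (by positivity)),
           hFj1 _ _⟩) n with hT
      set φ : ℕ → ℕ := fun n => (T n).1 with hφ
      set t : ℕ → ℝ := fun n => Dm L (x (φ n)) y with htd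
      have hφN₀ : ∀ n, N₀ ≤ φ n := fun n => (T n).2
      have htpos : ∀ n, 0 < t n := fun n => hpos _ (hφN₀ n)
      have ht0 : t 0 < 1 := hFj2 1 one_pos
      have htsucc : ∀ n, t (n+1) < min (t n) ((1/2)^(n+1)) := fun n => hFj2 _ _
      have htdec : ∀ n, t (n+1) < t n := fun n => lt_of_lt_of_le (htsucc n) (min_le_left _ _)
      have htbound : ∀ n, t n < (1/2)^n := by
        intro n
        cases n with
        | zero => simpa using ht0
        | succ n => exact lt_of_lt_of_le (htsucc n) (min_le_right _ _)
      have hxout : ∀ n, x (φ n) ∉ U := fun n => hN₀ _ (hφN₀ n)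
      set z : ℕ → X := fun i => x (φ (i+1)) with hz
      set A : ℕ → Set X := fun i => {u | t (i+2) < Dm L u y ∧ Dm L u y < t i} with hA
      have hAopen : ∀ i, IsOpen (A i) :=
        fun i => (isOpen_lt continuous_const (Dm_cont_left L y)).inter
          (isOpen_lt (Dm_cont_left L y) continuous_const)
      have hzA : ∀ i, z i ∈ A i := fun i => ⟨htdec (i+1), htdec i⟩
      have hbump : ∀ i : ℕ, ∃ g : X → ℝ, Continuous g ∧ g (z i) = 1 ∧
          (∀ u, 0 ≤ g u ∧ g u ≤ 1) ∧ ∀ u ∈ (A i)ᶜ ∪ closure W, g u = 0 := by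
        intro i
        have hCclosed : IsClosed ((A i)ᶜ ∪ closure W) :=
          (hAopen i).isClosed_compl.union isClosed_closure
        have hznot : z i ∉ (A i)ᶜ ∪ closure W := by
          rintro (h | h)
          · exact h (hzA i)
          · exact hxout (i+1) (hclWU h)
        obtain ⟨g, hgc, hgz, hgK⟩ :=
          CompletelyRegularSpace.completely_regular (z i) _ hCclosed hznot
        refine ⟨fun u => 1 - (g u : ℝ),
          continuous_const.sub (continuous_subtype_val.comp hgc), ?_, ?_, ?_⟩
        · show (1:ℝ) - ((g (z i) : ℝ)) = 1
          rw [hgz]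
          norm_num
        · intro u
          have h1 := (g u).2.1
          have h2 := (g u).2.2
          constructor
          · show (0:ℝ) ≤ 1 - ((g u : ℝ))
            linarith
          · show (1:ℝ) - ((g u : ℝ)) ≤ 1
            linarith
        · intro u hu
          show (1:ℝ) - ((g u : ℝ)) = 0
          rw [hgK hu]
          norm_num
      choose g hgc hgz hgbound hgzero using hbump
      set b : ℕ → ℝ := fun i => ((i:ℝ)+2) * (1 + rho L hLc (z i)) with hb
      have hbpos : ∀ i, 0 < b i := by
        intro i
        have := rho_nonneg L hLc (z i)
        rw [hb]
        have h1 : (0:ℝ) < 1 + rho L hLc (z i) := by linarith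
        positivity
      set f : ℕ → X → ℝ := fun i u => b i * g i u with hf
      have hfcont : ∀ i, Continuous (f i) := fun i => continuous_const.mul (hgc i)
      have hfnonneg : ∀ i u, 0 ≤ f i u :=
        fun i u => mul_nonneg (hbpos i).le (hgbound i u).1
      have hsupp : ∀ i u, f i u ≠ 0 → u ∈ A i ∧ u ∉ closure W := by
        intro i u hne
        by_contra hcon
        rw [not_and_or, not_not] at hcon
        have hmem : u ∈ (A i)ᶜ ∪ closure W := by
          rcases hcon with h | h
          · exact Or.inl h
          · exact Or.inr h
        exact hne (by rw [hf]; simp [hgzero i u hmem])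
      have hLF : LocallyFinite (fun i => support (f i)) := by
        intro u
        by_cases huW : u ∈ W
        · refine ⟨W, hWopen.mem_nhds huW, ?_⟩
          apply Set.Finite.subset Set.finite_empty
          rintro i ⟨w, hw1, hw2⟩
          exact absurd (subset_closure hw2) (hsupp i w hw1).2
        · have huy : u ≠ y := fun h => huW (h ▸ hyW)
          have hδ : 0 < Dm L u y := by
            rcases (Dm_nonneg L u y).lt_or_eq with h | h
            · exact h
            · exact absurd ((Dm_eq_zero_iff L hLc hLs u y).1 h.symm) huy
          obtain ⟨M, hM⟩ := exists_pow_lt_of_lt_one (half_pos hδ) (by norm_num : (1/2:ℝ) < 1)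
          refine ⟨{w | Dm L w u < Dm L u y / 2},
            IsOpen.mem_nhds (isOpen_lt (Dm_cont_left L u) continuous_const) ?_, ?_⟩
          · simp only [mem_setOf_eq, Dm_self]
            linarith
          · refine Set.Finite.subset (Set.finite_Iio M) ?_
            rintro i ⟨w, hw1, hw2⟩
            simp only [mem_Iio]
            by_contra hge
            push_neg at hge
            have h1 : w ∈ A i := (hsupp i w hw1).1
            have h2 : Dm L w y < t i := h1.2
            have h3 : t i < (1/2)^i := htbound i
            have h4 : ((1:ℝ)/2)^i ≤ (1/2)^M :=
              pow_le_pow_of_le_one (by norm_num) (by norm_num) hge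
            have h5 : Dm L u y ≤ Dm L u w + Dm L w y := Dm_triangle L u w y
            have h6 : Dm L u w = Dm L w u := Dm_symm L u w
            simp only [mem_setOf_eq] at hw2
            linarith
      have hhc : Continuous fun u => ∑ᶠ i, f i u := continuous_finsum hfcont hLF
      refine ⟨⟨fun u => ∑ᶠ i, f i u, hhc⟩, ?_⟩
      intro n
      refine ⟨φ (n+1), ?_⟩
      have hfsupfin : (support fun i => f i (z n)).Finite := by
        obtain ⟨B, hB1, hB2⟩ := hLF (z n)
        refine hB2.subset ?_
        intro i hi
        exact ⟨z n, hi, mem_of_mem_nhds hB1⟩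
      have heval : (∑ᶠ i, f i (z n)) = ∑ i ∈ hfsupfin.toFinset, f i (z n) :=
        finsum_eq_sum _ hfsupfin
      have hfzn : f n (z n) = b n := by
        rw [hf]; simp [hgz n]
      have hbn : b n ≠ 0 := (hbpos n).ne'
      have hmem : n ∈ hfsupfin.toFinset := by
        rw [Set.Finite.mem_toFinset, mem_support, hfzn]
        exact hbn
      have hge : b n ≤ ∑ i ∈ hfsupfin.toFinset, f i (z n) := by
        rw [← hfzn]
        exact Finset.single_le_sum (fun i _ => hfnonneg i (z n)) hmem
      show ((n : ℝ) + 1) * (1 + rho L hLc (x (φ (n+1)))) ≤ ∑ᶠ i, f i (x (φ (n+1)))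
      have hzxn : z n = x (φ (n+1)) := rfl
      rw [← hzxn, heval]
      have hρ := rho_nonneg L hLc (z n)
      have hbneq : b n = ((n:ℝ)+2) * (1 + rho L hLc (z n)) := rfl
      have : ((n : ℝ) + 1) * (1 + rho L hLc (z n)) ≤ b n := by
        rw [hbneq]
        nlinarith [hρ]
      linarith
    · -- CASE 2 : no Dm-cluster point
      push_neg at hD
      set b : ℕ → ℝ := fun j => ((j:ℝ)+1) * (1 + rho L hLc (x j)) with hb
      have hbpos : ∀ j, 0 < b j := by
        intro j
        have := rho_nonneg L hLc (x j)
        rw [hb]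
        have h1 : (0:ℝ) < 1 + rho L hLc (x j) := by linarith
        positivity
      set r : ℕ → ℝ := fun j => (1/2)^j with hr
      have hrpos : ∀ j, 0 < r j := fun j => by rw [hr]; positivity
      set f : ℕ → X → ℝ := fun j u => b j * max 0 (1 - Dm L u (x j) / r j) with hf
      have hfcont : ∀ j, Continuous (f j) := by
        intro j
        refine continuous_const.mul (Continuous.max continuous_const ?_)
        exact continuous_const.sub ((Dm_cont_left L (x j)).div_const _)
      have hfnonneg : ∀ j u, 0 ≤ f j u :=
        fun j u => mul_nonneg (hbpos j).le (le_max_left _ _)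
      have hsupp : ∀ j u, f j u ≠ 0 → Dm L u (x j) < r j := by
        intro j u hne
        by_contra hge
        push_neg at hge
        have h1 : 1 - Dm L u (x j) / r j ≤ 0 := by
          rw [sub_nonpos, le_div_iff₀ (hrpos j)]
          linarith
        exact hne (by rw [hf]; simp [max_eq_left h1])
      have hLF : LocallyFinite (fun j => support (f j)) := by
        intro u
        obtain ⟨ε, hε, N, hN⟩ := hD u
        obtain ⟨M, hM⟩ := exists_pow_lt_of_lt_one (half_pos hε) (by norm_num : (1/2:ℝ) < 1)
        refine ⟨{w | Dm L w u < ε/2},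
          IsOpen.mem_nhds (isOpen_lt (Dm_cont_left L u) continuous_const) ?_, ?_⟩
        · simp only [mem_setOf_eq, Dm_self]
          linarith
        · refine Set.Finite.subset (Set.finite_Iio (max N M)) ?_
          rintro j ⟨w, hw1, hw2⟩
          simp only [mem_Iio]
          by_contra hge
          push_neg at hge
          have hjN : N ≤ j := le_trans (le_max_left _ _) hge
          have hjM : M ≤ j := le_trans (le_max_right _ _) hge
          have h1 : Dm L w (x j) < r j := hsupp j w hw1
          have h2 : r j ≤ (1/2)^M := by
            rw [hr]
            exact pow_le_pow_of_le_one (by norm_num) (by norm_num) hjM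
          have h3 : ε ≤ Dm L (x j) u := hN j hjN
          have h4 : Dm L (x j) u ≤ Dm L (x j) w + Dm L w u := Dm_triangle L (x j) w u
          have h5 : Dm L (x j) w = Dm L w (x j) := Dm_symm L (x j) w
          simp only [mem_setOf_eq] at hw2
          linarith
      have hhc : Continuous fun u => ∑ᶠ j, f j u := continuous_finsum hfcont hLF
      refine ⟨⟨fun u => ∑ᶠ j, f j u, hhc⟩, ?_⟩
      intro n
      refine ⟨n, ?_⟩
      have hfsupfin : (support fun j => f j (x n)).Finite := by
        obtain ⟨B, hB1, hB2⟩ := hLF (x n)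
        refine hB2.subset ?_
        intro j hj
        exact ⟨x n, hj, mem_of_mem_nhds hB1⟩
      have heval : (∑ᶠ j, f j (x n)) = ∑ j ∈ hfsupfin.toFinset, f j (x n) :=
        finsum_eq_sum _ hfsupfin
      have hfxn : f n (x n) = b n := by
        rw [hf]
        simp [Dm_self]
      have hmem : n ∈ hfsupfin.toFinset := by
        rw [Set.Finite.mem_toFinset, mem_support, hfxn]
        exact (hbpos n).ne'
      show ((n : ℝ) + 1) * (1 + rho L hLc (x n)) ≤ ∑ᶠ j, f j (x n)
      rw [heval]
      calc ((n : ℝ) + 1) * (1 + rho L hLc (x n)) = f n (x n) := by rw [hfxn, hb]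
      _ ≤ ∑ j ∈ hfsupfin.toFinset, f j (x n) :=
          Finset.single_le_sum (fun j _ => hfnonneg j (x n)) hmem
  obtain ⟨h, hh⟩ := hfun
  obtain ⟨f, hf⟩ := hLs h
  obtain ⟨n, hn⟩ := exists_nat_ge ‖f‖
  obtain ⟨j, hj⟩ := hh n
  have h1 : h (x j) ≤ |L f (x j)| := by rw [hf]; exact le_abs_self _
  have h2 : |L f (x j)| ≤ rho L hLc (x j) * ‖f‖ := abs_L_le L hLc f (x j)
  have h3 := rho_nonneg L hLc (x j)
  have h4 : rho L hLc (x j) * ‖f‖ ≤ rho L hLc (x j) * n :=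
    mul_le_mul_of_nonneg_left hn h3
  have h5 : (0:ℝ) ≤ n := Nat.cast_nonneg n
  nlinarith


theorem mapClusterPt_image {Y Z : Type*} [TopologicalSpace Y] [TopologicalSpace Z]
    {u : ℕ → Y} {y : Y} (h : MapClusterPt y atTop u) {f : Y → Z} (hf : Continuous f) :
    MapClusterPt (f y) atTop (fun n => f (u n)) := by
  rw [mapClusterPt_iff_frequently] at h ⊢
  intro s hs
  exact (h (f ⁻¹' s) (hf.continuousAt.preimage_mem_nhds hs)).mono fun j hj => hj

include hLc hLs in
theorem isSeqCompact_range_eD : IsSeqCompact (range (eD L)) := by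
  intro u hu
  choose xs hxs using hu
  obtain ⟨y, hy⟩ := exists_mapClusterPt L hLc hLs xs
  have hclu : MapClusterPt (eD L y) atTop (fun j => eD L (xs j)) :=
    mapClusterPt_image hy (eD_continuous L)
  have hequ : (fun j => eD L (xs j)) = u := funext hxs
  rw [hequ] at hclu
  obtain ⟨ψ, hψmono, hψ⟩ := TopologicalSpace.FirstCountableTopology.tendsto_subseq hclu
  exact ⟨eD L y, mem_range_self y, ψ, hψmono, hψ⟩

include hLc hLs in
theorem isCompact_range_eD : IsCompact (range (eD L)) :=
  (isSeqCompact_range_eD L hLc hLs).isCompact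

include hLc hLs in
theorem eD_isClosedMap : IsClosedMap (eD L) := by
  intro F hF
  have hseq : IsSeqClosed (eD L '' F) := by
    intro u ζ hu hlim
    choose xs hxsF hxs using hu
    obtain ⟨y, hy⟩ := exists_mapClusterPt L hLc hLs xs
    have hyF : y ∈ F := by
      rw [← hF.closure_eq, mem_closure_iff_clusterPt]
      have h1 : ClusterPt y (Filter.map xs atTop) := hy
      exact h1.mono (le_principal_iff.2 (mem_map.2 (Filter.Eventually.of_forall hxsF)))
    have hclu : MapClusterPt (eD L y) atTop (fun j => eD L (xs j)) :=
      mapClusterPt_image hy (eD_continuous L)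
    have hequ : (fun j => eD L (xs j)) = u := funext hxs
    rw [hequ] at hclu
    have heq : eD L y = ζ := by
      have hne : (𝓝 (eD L y) ⊓ 𝓝 ζ).NeBot := by
        have h1 : (𝓝 (eD L y) ⊓ map u atTop).NeBot := hclu
        exact h1.mono (inf_le_inf_left _ hlim)
      exact t2_iff_nhds.1 inferInstance hne
    rw [← heq]
    exact mem_image_of_mem _ hyF
  exact hseq.isClosed

include hLc hLs in
theorem eD_isClosedEmbedding : IsClosedEmbedding (eD L) :=
  IsClosedEmbedding.of_continuous_injective_isClosedMap (eD_continuous L)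
    (eD_injective L hLc hLs) (eD_isClosedMap L hLc hLs)

include hLc hLs in
theorem main_compactSpace : CompactSpace X := by
  rw [← isCompact_univ_iff, (eD_isClosedEmbedding L hLc hLs).isInducing.isCompact_iff,
    image_univ]
  exact isCompact_range_eD L hLc hLs

include hLc hLs in
theorem main_metrizable : TopologicalSpace.MetrizableSpace X :=
  (eD_isClosedEmbedding L hLc hLs).isEmbedding.metrizableSpace



end SCD

/-- a Tychonoff space ℓ-dominated by the unit interval is compact,
metrizable and strongly countable dimensional. -/
theorem compact_metrizable_scd_of_ellDominated_by_unitInterval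
    (X : Type*) [TopologicalSpace X] [T35Space X]
    (h : LDominates unitInterval X) :
    CompactSpace X ∧ TopologicalSpace.MetrizableSpace X ∧ StronglyCountableDim X := by
  obtain ⟨L, hLc, hLs⟩ := h
  have hcomp : CompactSpace X := SCD.main_compactSpace L hLc hLs
  have hmetr : TopologicalSpace.MetrizableSpace X := SCD.main_metrizable L hLc hLs
  refine ⟨hcomp, hmetr, ?_⟩
  refine ⟨fun n => SCD.XS L n, fun n => SCD.isClosed_XS L n, ?_, ?_⟩
  · intro n
    haveI : CompactSpace ↥(SCD.XS L n) :=
      isCompact_iff_compactSpace.1 ((SCD.isClosed_XS L n).isCompact)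
    refine ⟨2 ^ (n + n) - 1, ?_⟩
    refine SCD.covDimLE_of_emb (n + n)
      (fun y (j : Fin (n + n)) => SCD.eD L y.1 (j : ℕ)) ?_ ?_
    · exact continuous_pi fun j =>
        (continuous_apply ((j : ℕ))).comp ((SCD.eD_continuous L).comp continuous_subtype_val)
    · intro y1 y2 heq
      refine Subtype.ext (SCD.XS_inj L hLc hLs y1.2 y2.2 (fun m hm => ?_))
      exact congrFun heq ⟨m, hm⟩
  · rw [eq_univ_iff_forall]
    intro x
    obtain ⟨n, hn⟩ := SCD.XS_cover L hLc x
    exact mem_iUnion.2 ⟨n, hn⟩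

end
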